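/- Let p ≥ 1 and let f be a monotone norm on ℝⁿ that is differentiable at every point of the nonnegative orthant except the origin and is p-supermodular. Let x, y ∈ ℝⁿ satisfy 0 ≤ x ≤ y coordinatewise, x ≠ 0, and f(y)^{p−1} ≤ 2·f(x)^{p−1}. Then for every coordinate i ∈ {1,…,n}, ∂_i f(x) ≤ 2·∂_i f(y). -/

import Mathlib

noncomputable section

/-- A monotone norm on ℝⁿ: subadditive, absolutely homogeneous, point-separating, and
monotone on the nonnegative orthant. -/
def IsMonotoneNorm {n : ℕ} (N : (Fin n → ℝ) → ℝ) : Prop :=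
  (∀ x y, N (x + y) ≤ N x + N y) ∧
  (∀ (c : ℝ) (x), N (c • x) = |c| * N x) ∧
  (∀ x, N x = 0 → x = 0) ∧
  (∀ x y : Fin n → ℝ, 0 ≤ x → x ≤ y → N x ≤ N y)

/-- `N` is `p`-supermodular: `N(u+v+w)^p − N(u+v)^p ≥ N(u+w)^p − N(u)^p` for all
nonnegative `u, v, w`. -/
def IsPSupermodular {n : ℕ} (N : (Fin n → ℝ) → ℝ) (p : ℝ) : Prop :=
  ∀ u v w : Fin n → ℝ, 0 ≤ u → 0 ≤ v → 0 ≤ w →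
    N (u + w) ^ p - N u ^ p ≤ N (u + v + w) ^ p - N (u + v) ^ p


open Filter Topology in
private lemma deriv_le_of_diff_le {φ ψ : ℝ → ℝ} {a b : ℝ}
    (ha : HasDerivAt φ a 0) (hb : HasDerivAt ψ b 0)
    (h : ∀ t : ℝ, 0 < t → φ t - φ 0 ≤ ψ t - ψ 0) : a ≤ b := by
  have ha' : Tendsto (slope φ 0) (𝓝[>] 0) (𝓝 a) :=
    (hasDerivAt_iff_tendsto_slope.mp ha).mono_left
      (nhdsWithin_mono _ fun t ht => ne_of_gt ht)
  have hb' : Tendsto (slope ψ 0) (𝓝[>] 0) (𝓝 b) :=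
    (hasDerivAt_iff_tendsto_slope.mp hb).mono_left
      (nhdsWithin_mono _ fun t ht => ne_of_gt ht)
  refine le_of_tendsto_of_tendsto ha' hb' (eventually_nhdsWithin_of_forall fun t ht => ?_)
  have ht' : (0:ℝ) < t := ht
  simp only [slope_def_field, sub_zero]
  exact div_le_div_of_nonneg_right (h t ht') ht'.le

/-- Approximate monotonicity of the gradient of a `p`-supermodular norm within a phase:
if `0 ≤ x ≤ y`, `x ≠ 0`, and `f(y)^{p−1} ≤ 2·f(x)^{p−1}`, then `∂ᵢf(x) ≤ 2·∂ᵢf(y)` for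
every coordinate `i`. -/
theorem pSupermodular_gradient_phase {n : ℕ} (p : ℝ) (hp : 1 ≤ p)
    (f : (Fin n → ℝ) → ℝ) (hf : IsMonotoneNorm f)
    (hdiff : ∀ x : Fin n → ℝ, 0 ≤ x → x ≠ 0 → DifferentiableAt ℝ f x)
    (hsup : IsPSupermodular f p)
    (x y : Fin n → ℝ) (hx : 0 ≤ x) (hxy : x ≤ y) (hx0 : x ≠ 0)
    (hphase : f y ^ (p - 1) ≤ 2 * f x ^ (p - 1)) :
    ∀ i : Fin n,
      fderiv ℝ f x (Pi.single i 1) ≤ 2 * fderiv ℝ f y (Pi.single i 1) := by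
  intro i
  set e : Fin n → ℝ := Pi.single i 1 with he_def
  have he : (0 : Fin n → ℝ) ≤ e := by
    intro j
    classical
    simp only [he_def, Pi.zero_apply, Pi.single_apply]
    split <;> norm_num
  have hy : (0 : Fin n → ℝ) ≤ y := le_trans hx hxy
  have hy0 : y ≠ 0 := by
    intro h
    exact hx0 (le_antisymm (h ▸ hxy) hx)
  have hfx0 : 0 < f x := by
    have h0 : f 0 = 0 := by
      have := hf.2.1 0 0
      simpa using this
    have hnn : 0 ≤ f x := h0 ▸ hf.2.2.2 0 x le_rfl hx
    rcases hnn.lt_or_eq with h | h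
    · exact h
    · exact absurd (hf.2.2.1 x h.symm) hx0
  have hp0 : 0 < p := lt_of_lt_of_le zero_lt_one hp
  -- derivatives of t ↦ f(z + t • e) ^ p for z = x, y
  have key : ∀ z : Fin n → ℝ, 0 ≤ z → z ≠ 0 →
      HasDerivAt (fun t : ℝ => f (z + t • e) ^ p)
        (p * f z ^ (p - 1) * fderiv ℝ f z e) 0 := by
    intro z hz hz0
    have hg : HasDerivAt (fun t : ℝ => z + t • e) e 0 := by
      simpa using ((hasDerivAt_id (0:ℝ)).smul_const e).const_add z
    have h1 : HasFDerivAt f (fderiv ℝ f z) ((fun t : ℝ => z + t • e) 0) := by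
      simpa using (hdiff z hz hz0).hasFDerivAt
    have h2 : HasDerivAt (fun t : ℝ => f (z + t • e)) (fderiv ℝ f z e) 0 :=
      h1.comp_hasDerivAt 0 hg
    have h3 : HasDerivAt (fun s : ℝ => s ^ p) (p * f z ^ (p - 1))
        ((fun t : ℝ => f (z + t • e)) 0) := by
      simpa using Real.hasDerivAt_rpow_const (x := f z) (p := p) (Or.inr hp)
    simpa [Function.comp_def, mul_comm, mul_assoc, mul_left_comm] using h3.comp 0 h2
  have hkx := key x hx hx0
  have hky := key y hy hy0
  -- supermodularity gives the difference inequality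
  have hdiffle : ∀ t : ℝ, 0 < t →
      (fun t : ℝ => f (x + t • e) ^ p) t - (fun t : ℝ => f (x + t • e) ^ p) 0 ≤
      (fun t : ℝ => f (y + t • e) ^ p) t - (fun t : ℝ => f (y + t • e) ^ p) 0 := by
    intro t ht
    have hv : (0 : Fin n → ℝ) ≤ y - x := sub_nonneg.mpr hxy
    have hw : (0 : Fin n → ℝ) ≤ t • e := smul_nonneg ht.le he
    have := hsup x (y - x) (t • e) hx hv hw
    simp only [add_sub_cancel] at this
    simpa using this
  have hmain : p * f x ^ (p - 1) * fderiv ℝ f x e ≤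
      p * f y ^ (p - 1) * fderiv ℝ f y e :=
    deriv_le_of_diff_le hkx hky hdiffle
  -- nonnegativity of ∂ᵢ f(y)
  have hDy : 0 ≤ fderiv ℝ f y e := by
    have hconst : HasDerivAt (fun _ : ℝ => f (y + (0:ℝ) • e) ^ p) 0 0 := hasDerivAt_const _ _
    have h0le : ∀ t : ℝ, 0 < t →
        (fun _ : ℝ => f (y + (0:ℝ) • e) ^ p) t - (fun _ : ℝ => f (y + (0:ℝ) • e) ^ p) 0 ≤
        (fun t : ℝ => f (y + t • e) ^ p) t - (fun t : ℝ => f (y + t • e) ^ p) 0 := by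
      intro t ht
      simp only [sub_self, zero_smul, add_zero]
      have hmono : f y ≤ f (y + t • e) :=
        hf.2.2.2 y _ hy (le_add_of_nonneg_right (smul_nonneg ht.le he))
      have h0fy : 0 ≤ f y := le_trans hfx0.le (hf.2.2.2 x y hx hxy)
      have := Real.rpow_le_rpow h0fy hmono hp0.le
      simpa using sub_nonneg.mpr this
    have h1 := deriv_le_of_diff_le hconst hky h0le
    have hB : 0 < f y ^ (p - 1) :=
      Real.rpow_pos_of_pos (lt_of_lt_of_le hfx0 (hf.2.2.2 x y hx hxy)) (p - 1)
    nlinarith [mul_pos hp0 hB]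
  have hA : 0 < f x ^ (p - 1) := Real.rpow_pos_of_pos hfx0 (p - 1)
  nlinarith [mul_le_mul_of_nonneg_right hphase hDy, hA.le, hp0.le,
    mul_pos hp0 hA]
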